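/- For the nrDFAwtl A_ex3 defined in the context, the Parikh image of L(A_ex3) with respect to the letter ordering (a,b,c) equals {(2n+1, 2n+1, 2n+1) : n ≥ 0}; that is, every word in L(A_ex3) contains the same odd number of occurrences of a, b, and c, and for every n ≥ 0 there is a word in L(A_ex3) with exactly 2n+1 occurrences of each letter. -/

import Mathlib

/-- The end-of-tape behaviour of a non-returning automaton with translucent
letters: either a set of states to continue with (the empty set meaning that
the transition is undefined), or the operation `Accept`. -/
inductive EndMove (Q : Type) where
  | cont : Set Q → EndMove Q
  | accept : EndMove Q

/-- A nondeterministic finite automaton with translucent letters (NFAwtl).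
`τ q` is the set of letters that are translucent for state `q`. -/
structure NFAwtl (Q : Type) (A : Type) where
  τ : Q → Set A
  I : Set Q
  F : Set Q
  δ : Q → A → Set Q
  tr_compat : ∀ q a, a ∈ τ q → δ q a = ∅

namespace NFAwtl

variable {Q A : Type}

/-- A single computation step of an NFAwtl: the first letter (from the left)
that is not translucent for the current state is read and deleted. -/
inductive Step (M : NFAwtl Q A) : Q × List A → Q × List A → Prop
  | read (q q' : Q) (u v : List A) (a : A) :
      (∀ b ∈ u, b ∈ M.τ q) → a ∉ M.τ q → q' ∈ M.δ q a →
      Step M (q, u ++ a :: v) (q', u ++ v)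

/-- The language accepted by an NFAwtl: words from which some computation
reaches a configuration whose remaining tape contents is translucent for a
final state. -/
def lang (M : NFAwtl Q A) : Set (List A) :=
  { w | ∃ q₀ ∈ M.I, ∃ q w', Relation.ReflTransGen (Step M) (q₀, w) (q, w') ∧
        (∀ b ∈ w', b ∈ M.τ q) ∧ q ∈ M.F }

/-- An NFAwtl is deterministic (a DFAwtl) if it has a single initial state and
at most one transition for each state/letter pair. -/
def IsDet (M : NFAwtl Q A) : Prop :=
  (∃ q, M.I = {q}) ∧ ∀ q a, (M.δ q a).Subsingleton

end NFAwtl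

/-- A configuration of a non-returning automaton with translucent letters:
`conf x q w` means the tape contains `x ++ w` followed by the end-of-tape
marker, the current state is `q`, and the head is positioned at the first
letter of `w`; `accept` is the accepting halting configuration. -/
inductive NrConf (Q : Type) (A : Type) where
  | conf : List A → Q → List A → NrConf Q A
  | accept : NrConf Q A

/-- A non-returning nondeterministic finite automaton with translucent
letters (nrNFAwtl). -/
structure NrNFAwtl (Q : Type) (A : Type) where
  τ : Q → Set A
  I : Set Q
  δ : Q → A → Set Q
  δend : Q → EndMove Q
  tr_compat : ∀ q a, a ∈ τ q → δ q a = ∅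

namespace NrNFAwtl

variable {Q A : Type}

/-- A single computation step of an nrNFAwtl. -/
inductive Step (M : NrNFAwtl Q A) : NrConf Q A → NrConf Q A → Prop
  | read (x : List A) (q q' : Q) (u v : List A) (a : A) :
      (∀ b ∈ u, b ∈ M.τ q) → a ∉ M.τ q → q' ∈ M.δ q a →
      Step M (.conf x q (u ++ a :: v)) (.conf (x ++ u) q' v)
  | restart (x w : List A) (q q' : Q) (S : Set Q) :
      (∀ b ∈ w, b ∈ M.τ q) → M.δend q = .cont S → q' ∈ S →
      Step M (.conf x q w) (.conf [] q' (x ++ w))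
  | accept (x w : List A) (q : Q) :
      (∀ b ∈ w, b ∈ M.τ q) → M.δend q = .accept →
      Step M (.conf x q w) .accept

/-- The language accepted by an nrNFAwtl. -/
def lang (M : NrNFAwtl Q A) : Set (List A) :=
  { w | ∃ q₀ ∈ M.I, Relation.ReflTransGen (Step M) (.conf [] q₀ w) .accept }

/-- An nrNFAwtl is deterministic (an nrDFAwtl) if it has a single initial
state and, for every state and every letter (including the end-of-tape
marker), at most one transition is available. -/
def IsDet (M : NrNFAwtl Q A) : Prop :=
  (∃ q, M.I = {q}) ∧ (∀ q a, (M.δ q a).Subsingleton) ∧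
  (∀ q S, M.δend q = .cont S → S.Subsingleton)

end NrNFAwtl

/-- `L` is accepted by some NFAwtl. -/
def AcceptedByNFAwtl {A : Type} [Fintype A] (L : Set (List A)) : Prop :=
  ∃ (Q : Type) (_ : Fintype Q) (M : NFAwtl Q A), M.lang = L

/-- `L` is accepted by some DFAwtl. -/
def AcceptedByDFAwtl {A : Type} [Fintype A] (L : Set (List A)) : Prop :=
  ∃ (Q : Type) (_ : Fintype Q) (M : NFAwtl Q A), M.IsDet ∧ M.lang = L

/-- `L` is accepted by some nrNFAwtl. -/
def AcceptedByNrNFAwtl {A : Type} [Fintype A] (L : Set (List A)) : Prop :=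
  ∃ (Q : Type) (_ : Fintype Q) (M : NrNFAwtl Q A), M.lang = L

/-- `L` is accepted by some nrDFAwtl. -/
def AcceptedByNrDFAwtl {A : Type} [Fintype A] (L : Set (List A)) : Prop :=
  ∃ (Q : Type) (_ : Fintype Q) (M : NrNFAwtl Q A), M.IsDet ∧ M.lang = L

/-- The three-letter alphabet `{a, b, c}`. -/
inductive Γ3 : Type
  | a | b | c
deriving DecidableEq

instance : Fintype Γ3 :=
  ⟨{Γ3.a, Γ3.b, Γ3.c}, fun x => by cases x <;> simp⟩

/-- The state set of the nrDFAwtl `A_ex3`. -/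
inductive StEx3 : Type
  | q0 | q1 | q2 | q3 | q4 | q5 | q6 | q7 | q8
deriving DecidableEq

instance : Fintype StEx3 :=
  ⟨{StEx3.q0, StEx3.q1, StEx3.q2, StEx3.q3, StEx3.q4, StEx3.q5, StEx3.q6, StEx3.q7,
    StEx3.q8}, fun x => by cases x <;> simp⟩

/-- The translucency mapping of `A_ex3`. -/
def τEx3 : StEx3 → Set Γ3
  | .q0 => {Γ3.a}
  | .q1 => ∅
  | .q2 => ∅
  | .q3 => {Γ3.b}
  | .q4 => ∅
  | .q5 => ∅
  | .q6 => {Γ3.a, Γ3.c}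
  | .q7 => ∅
  | .q8 => ∅

/-- The letter transitions of `A_ex3`. -/
def δEx3 : StEx3 → Γ3 → Set StEx3
  | .q0, .b => {StEx3.q1}
  | .q1, .c => {StEx3.q2}
  | .q2, .a => {StEx3.q3}
  | .q3, .c => {StEx3.q4}
  | .q4, .a => {StEx3.q5}
  | .q5, .b => {StEx3.q6}
  | .q6, .b => {StEx3.q1}
  | .q7, .a => {StEx3.q8}
  | _, _ => ∅

/-- The end-of-tape transitions of `A_ex3`. -/
def δendEx3 : StEx3 → EndMove StEx3
  | .q2 => .cont {StEx3.q7}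
  | .q6 => .cont {StEx3.q0}
  | .q8 => .accept
  | _ => .cont ∅

/-- The nrDFAwtl `A_ex3` from Example 7 of the paper. -/
def Aex3 : NrNFAwtl StEx3 Γ3 where
  τ := τEx3
  I := {StEx3.q0}
  δ := δEx3
  δend := δendEx3
  tr_compat := by
    intro q x h
    cases q <;> cases x <;> simp_all [τEx3, δEx3]

section AuxAex3

open Γ3 StEx3

/-- Invariant for the backward (soundness) direction. -/
def PhiEx3 : NrConf StEx3 Γ3 → Prop
  | .accept => True
  | .conf x q w =>
    let A := (x ++ w).count Γ3.a
    let B := (x ++ w).count Γ3.b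
    let C := (x ++ w).count Γ3.c
    match q with
    | .q0 => A = B ∧ B = C ∧ A % 2 = 1
    | .q1 => A = B + 1 ∧ A = C ∧ A % 2 = 1
    | .q2 => A = B + 1 ∧ A = C + 1 ∧ A % 2 = 1
    | .q3 => A = B ∧ B = C ∧ A % 2 = 0
    | .q4 => A = B ∧ A = C + 1 ∧ A % 2 = 0
    | .q5 => B = A + 1 ∧ A = C ∧ A % 2 = 1
    | .q6 => A = B ∧ B = C ∧ A % 2 = 1
    | .q7 => w = [Γ3.a]
    | .q8 => w = []

lemma phi_back (c c' : NrConf StEx3 Γ3) (h : Aex3.Step c c') (h' : PhiEx3 c') :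
    PhiEx3 c := by
  cases h with
  | read x q q' u v a hu ha hq' =>
    cases q <;> cases a <;>
      simp only [Aex3, δEx3, Set.mem_singleton_iff, Set.mem_empty_iff_false] at hq' <;>
      try exact hq'.elim
    all_goals subst hq'
    case read.q7.a =>
      have hu0 : u = [] := by
        cases u with
        | nil => rfl
        | cons y t => exact absurd (hu y (by simp)) (by simp [Aex3, τEx3])
      simp only [PhiEx3] at h'
      subst h' hu0
      simp [PhiEx3]
    all_goals
      simp only [PhiEx3, List.count_append, List.count_cons] at h' ⊢ <;>
      simp_all <;> omega
  | restart x w q q' S hw hS hq' =>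
    cases q <;> simp only [Aex3, δendEx3] at hS
    case q8 => exact absurd hS (by simp)
    case q2 =>
      injection hS with h
      subst h
      rw [Set.mem_singleton_iff] at hq'
      subst hq'
      simp only [PhiEx3] at h'
      simp only [PhiEx3]
      rw [h']
      simp
    case q6 =>
      injection hS with h
      subst h
      rw [Set.mem_singleton_iff] at hq'
      subst hq'
      simp only [PhiEx3, List.count_append, List.nil_append] at h' ⊢
      omega
    all_goals (injection hS with h; subst h; exact absurd hq' (by simp))
  | accept x w q hw hq =>
    cases q
    case q8 =>
      simp only [PhiEx3]
      cases w with
      | nil => rfl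
      | cons y t => exact absurd (hw y (by simp)) (by simp [Aex3, τEx3])
    all_goals exact absurd hq (by simp [Aex3, δendEx3])

lemma phi_of_acc (c : NrConf StEx3 Γ3)
    (h : Relation.ReflTransGen Aex3.Step c .accept) : PhiEx3 c := by
  induction h using Relation.ReflTransGen.head_induction_on with
  | refl => trivial
  | head hstep _ ih => exact phi_back _ _ hstep ih

/-- The witness word with `2n+1` occurrences of each letter. -/
def wEx3 : ℕ → List Γ3
  | 0 => [Γ3.a, Γ3.b, Γ3.c]
  | n + 1 => Γ3.b :: Γ3.c :: Γ3.a :: Γ3.c :: Γ3.a :: Γ3.b :: wEx3 n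

lemma wEx3_count (n : ℕ) :
    (wEx3 n).count Γ3.a = 2 * n + 1 ∧ (wEx3 n).count Γ3.b = 2 * n + 1 ∧
    (wEx3 n).count Γ3.c = 2 * n + 1 := by
  induction n with
  | zero => decide
  | succ n ih =>
    simp [wEx3, List.count_cons]
    omega

lemma step_read (x u v : List Γ3) (q q' : StEx3) (a : Γ3)
    (h1 : ∀ b ∈ u, b ∈ τEx3 q) (h2 : a ∉ τEx3 q) (h3 : q' ∈ δEx3 q a) :
    Aex3.Step (.conf x q (u ++ a :: v)) (.conf (x ++ u) q' v) :=
  NrNFAwtl.Step.read x q q' u v a h1 h2 h3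

lemma acc_q2 (x : List Γ3) (hx : x = [Γ3.a]) :
    Relation.ReflTransGen Aex3.Step (.conf x .q2 []) .accept := by
  subst hx
  refine Relation.ReflTransGen.head
    (NrNFAwtl.Step.restart [Γ3.a] [] StEx3.q2 StEx3.q7 {StEx3.q7} (by simp) rfl rfl) ?_
  refine Relation.ReflTransGen.head
    (show Aex3.Step (.conf [] .q7 ([] ++ Γ3.a :: [])) (.conf ([] ++ []) .q8 [])
      from step_read [] [] [] .q7 .q8 Γ3.a (by simp) (by simp [τEx3]) (by simp [δEx3])) ?_
  exact Relation.ReflTransGen.single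
    (NrNFAwtl.Step.accept [] [] StEx3.q8 (by simp) rfl)

lemma acc_q6 (n : ℕ) :
    Relation.ReflTransGen Aex3.Step (.conf [] .q6 (wEx3 n)) .accept := by
  induction n with
  | zero =>
    refine Relation.ReflTransGen.head
      (show Aex3.Step (.conf [] .q6 ([Γ3.a] ++ Γ3.b :: [Γ3.c]))
          (.conf ([] ++ [Γ3.a]) .q1 [Γ3.c])
        from step_read _ _ _ _ _ _ (by simp [τEx3]) (by simp [τEx3]) (by simp [δEx3])) ?_
    refine Relation.ReflTransGen.head
      (show Aex3.Step (.conf [Γ3.a] .q1 ([] ++ Γ3.c :: []))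
          (.conf ([Γ3.a] ++ []) .q2 [])
        from step_read _ _ _ _ _ _ (by simp) (by simp [τEx3]) (by simp [δEx3])) ?_
    exact acc_q2 _ rfl
  | succ n ih =>
    have s1 : Aex3.Step (.conf [] .q6 ([] ++ Γ3.b :: (Γ3.c :: Γ3.a :: Γ3.c :: Γ3.a :: Γ3.b :: wEx3 n)))
        (.conf ([] ++ []) .q1 (Γ3.c :: Γ3.a :: Γ3.c :: Γ3.a :: Γ3.b :: wEx3 n)) :=
      step_read _ _ _ _ _ _ (by simp) (by simp [τEx3]) (by simp [δEx3])
    have s2 : Aex3.Step (.conf [] .q1 ([] ++ Γ3.c :: (Γ3.a :: Γ3.c :: Γ3.a :: Γ3.b :: wEx3 n)))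
        (.conf ([] ++ []) .q2 (Γ3.a :: Γ3.c :: Γ3.a :: Γ3.b :: wEx3 n)) :=
      step_read _ _ _ _ _ _ (by simp) (by simp [τEx3]) (by simp [δEx3])
    have s3 : Aex3.Step (.conf [] .q2 ([] ++ Γ3.a :: (Γ3.c :: Γ3.a :: Γ3.b :: wEx3 n)))
        (.conf ([] ++ []) .q3 (Γ3.c :: Γ3.a :: Γ3.b :: wEx3 n)) :=
      step_read _ _ _ _ _ _ (by simp) (by simp [τEx3]) (by simp [δEx3])
    have s4 : Aex3.Step (.conf [] .q3 ([] ++ Γ3.c :: (Γ3.a :: Γ3.b :: wEx3 n)))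
        (.conf ([] ++ []) .q4 (Γ3.a :: Γ3.b :: wEx3 n)) :=
      step_read _ _ _ _ _ _ (by simp) (by simp [τEx3]) (by simp [δEx3])
    have s5 : Aex3.Step (.conf [] .q4 ([] ++ Γ3.a :: (Γ3.b :: wEx3 n)))
        (.conf ([] ++ []) .q5 (Γ3.b :: wEx3 n)) :=
      step_read _ _ _ _ _ _ (by simp) (by simp [τEx3]) (by simp [δEx3])
    have s6 : Aex3.Step (.conf [] .q5 ([] ++ Γ3.b :: wEx3 n))
        (.conf ([] ++ []) .q6 (wEx3 n)) :=
      step_read _ _ _ _ _ _ (by simp) (by simp [τEx3]) (by simp [δEx3])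
    simp only [List.nil_append, List.append_nil] at s1 s2 s3 s4 s5 s6
    exact .head s1 (.head s2 (.head s3 (.head s4 (.head s5 (.head s6 ih)))))

lemma wEx3_mem (n : ℕ) : wEx3 n ∈ Aex3.lang := by
  refine ⟨.q0, rfl, ?_⟩
  cases n with
  | zero =>
    refine Relation.ReflTransGen.head
      (show Aex3.Step (.conf [] .q0 ([Γ3.a] ++ Γ3.b :: [Γ3.c]))
          (.conf ([] ++ [Γ3.a]) .q1 [Γ3.c])
        from step_read _ _ _ _ _ _ (by simp [τEx3]) (by simp [τEx3]) (by simp [δEx3])) ?_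
    refine Relation.ReflTransGen.head
      (show Aex3.Step (.conf [Γ3.a] .q1 ([] ++ Γ3.c :: []))
          (.conf ([Γ3.a] ++ []) .q2 [])
        from step_read _ _ _ _ _ _ (by simp) (by simp [τEx3]) (by simp [δEx3])) ?_
    exact acc_q2 _ rfl
  | succ n =>
    have s1 : Aex3.Step (.conf [] .q0 ([] ++ Γ3.b :: (Γ3.c :: Γ3.a :: Γ3.c :: Γ3.a :: Γ3.b :: wEx3 n)))
        (.conf ([] ++ []) .q1 (Γ3.c :: Γ3.a :: Γ3.c :: Γ3.a :: Γ3.b :: wEx3 n)) :=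
      step_read _ _ _ _ _ _ (by simp) (by simp [τEx3]) (by simp [δEx3])
    have s2 : Aex3.Step (.conf [] .q1 ([] ++ Γ3.c :: (Γ3.a :: Γ3.c :: Γ3.a :: Γ3.b :: wEx3 n)))
        (.conf ([] ++ []) .q2 (Γ3.a :: Γ3.c :: Γ3.a :: Γ3.b :: wEx3 n)) :=
      step_read _ _ _ _ _ _ (by simp) (by simp [τEx3]) (by simp [δEx3])
    have s3 : Aex3.Step (.conf [] .q2 ([] ++ Γ3.a :: (Γ3.c :: Γ3.a :: Γ3.b :: wEx3 n)))
        (.conf ([] ++ []) .q3 (Γ3.c :: Γ3.a :: Γ3.b :: wEx3 n)) :=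
      step_read _ _ _ _ _ _ (by simp) (by simp [τEx3]) (by simp [δEx3])
    have s4 : Aex3.Step (.conf [] .q3 ([] ++ Γ3.c :: (Γ3.a :: Γ3.b :: wEx3 n)))
        (.conf ([] ++ []) .q4 (Γ3.a :: Γ3.b :: wEx3 n)) :=
      step_read _ _ _ _ _ _ (by simp) (by simp [τEx3]) (by simp [δEx3])
    have s5 : Aex3.Step (.conf [] .q4 ([] ++ Γ3.a :: (Γ3.b :: wEx3 n)))
        (.conf ([] ++ []) .q5 (Γ3.b :: wEx3 n)) :=
      step_read _ _ _ _ _ _ (by simp) (by simp [τEx3]) (by simp [δEx3])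
    have s6 : Aex3.Step (.conf [] .q5 ([] ++ Γ3.b :: wEx3 n))
        (.conf ([] ++ []) .q6 (wEx3 n)) :=
      step_read _ _ _ _ _ _ (by simp) (by simp [τEx3]) (by simp [δEx3])
    simp only [List.nil_append, List.append_nil] at s1 s2 s3 s4 s5 s6
    exact .head s1 (.head s2 (.head s3 (.head s4 (.head s5 (.head s6 (acc_q6 n))))))

end AuxAex3

/-- The Parikh image of `L(A_ex3)` (w.r.t. the letter
ordering `(a, b, c)`) equals `{(2n+1, 2n+1, 2n+1) : n ≥ 0}`. -/
theorem Aex3_parikh_image :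
    { p : ℕ × ℕ × ℕ | ∃ w ∈ Aex3.lang,
        p = (w.count Γ3.a, w.count Γ3.b, w.count Γ3.c) } =
    { p : ℕ × ℕ × ℕ | ∃ n : ℕ, p = (2 * n + 1, 2 * n + 1, 2 * n + 1) } := by
  ext p
  simp only [Set.mem_setOf_eq]
  constructor
  · rintro ⟨w, ⟨qi, hqi, hsteps⟩, rfl⟩
    have hq : qi = .q0 := by simpa [Aex3] using hqi
    subst hq
    have hphi := phi_of_acc _ hsteps
    simp only [PhiEx3, List.nil_append] at hphi
    obtain ⟨h1, h2, h3⟩ := hphi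
    refine ⟨w.count Γ3.a / 2, ?_⟩
    simp only [Prod.mk.injEq]
    omega
  · rintro ⟨n, rfl⟩
    refine ⟨wEx3 n, wEx3_mem n, ?_⟩
    obtain ⟨h1, h2, h3⟩ := wEx3_count n
    simp only [h1, h2, h3]
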